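/- Let W = X·Y be the product of independent exponential random variables X and Y with means Ω₁ > 0 and Ω₂ > 0. Then for every s > 0, the Laplace transform satisfies E[exp(−s·W)] = (1/(s·Ω₁Ω₂))·exp(1/(s·Ω₁Ω₂))·E₁(1/(s·Ω₁Ω₂)), where E₁(z) = ∫_z^∞ (e^{−t}/t) dt is the exponential integral. -/

import Mathlib

open MeasureTheory ProbabilityTheory Real

/-- The exponential integral `E₁(z) = ∫_z^∞ e^{-t}/t dt`. -/
noncomputable def E1 (z : ℝ) : ℝ :=
  ∫ t in Set.Ioi z, Real.exp (-t) / t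

/-- Density of an exponential random variable with mean `Ω`. -/
noncomputable def expDens (Ω x : ℝ) : ℝ :=
  if 0 ≤ x then 1 / Ω * Real.exp (-x / Ω) else 0

lemma expDens_measurable (Ω : ℝ) : Measurable (expDens Ω) := by
  unfold expDens
  exact Measurable.ite measurableSet_Ici
    (((measurable_id.neg.div_const Ω).exp).const_mul _) measurable_const

lemma expDens_nonneg {Ω : ℝ} (hΩ : 0 < Ω) (x : ℝ) : 0 ≤ expDens Ω x := by
  unfold expDens; split_ifs with h
  · positivity
  · exact le_rfl

/-- The core integral transformation for the withDensity measure. -/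
lemma integral_expDens {Ω : ℝ} (hΩ : 0 < Ω) (f : ℝ → ℝ) :
    ∫ x, f x ∂(MeasureTheory.volume.withDensity (fun x => ENNReal.ofReal (expDens Ω x))) =
      ∫ x in Set.Ioi 0, 1 / Ω * Real.exp (-x / Ω) * f x := by
  have hmeas : Measurable (fun x => (expDens Ω x).toNNReal) :=
    (expDens_measurable Ω).real_toNNReal
  have h1 : (fun x => ENNReal.ofReal (expDens Ω x)) =
      (fun x => ((expDens Ω x).toNNReal : ENNReal)) := rfl
  rw [h1, integral_withDensity_eq_integral_smul hmeas]
  have h2 : ∀ x : ℝ, (expDens Ω x).toNNReal • f x = expDens Ω x * f x := by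
    intro x
    simp only [NNReal.smul_def, smul_eq_mul]
    rw [Real.coe_toNNReal _ (expDens_nonneg hΩ x)]
  simp only [h2]
  rw [← setIntegral_eq_integral_of_forall_compl_eq_zero
    (s := Set.Ici 0) (fun x hx => by
      simp only [Set.mem_Ici, not_le] at hx
      unfold expDens
      rw [if_neg (by linarith), zero_mul]),
    MeasureTheory.integral_Ici_eq_integral_Ioi]
  refine setIntegral_congr_fun measurableSet_Ioi (fun x hx => ?_)
  unfold expDens
  rw [if_pos (le_of_lt hx)]

lemma expDens_measure_Iio (Ω : ℝ) :
    (MeasureTheory.volume.withDensity (fun x => ENNReal.ofReal (expDens Ω x)))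
      (Set.Iio 0) = 0 := by
  rw [withDensity_apply _ measurableSet_Iio]
  rw [setLIntegral_congr_fun measurableSet_Iio
    (fun x (hx : x < 0) => by
      unfold expDens
      rw [if_neg (by linarith), ENNReal.ofReal_zero]), lintegral_zero]

lemma expDens_isProb {Ω : ℝ} (hΩ : 0 < Ω) :
    IsProbabilityMeasure
      (MeasureTheory.volume.withDensity (fun x => ENNReal.ofReal (expDens Ω x))) := by
  have h : (fun x => ENNReal.ofReal (expDens Ω x)) = exponentialPDF (1 / Ω) := by
    funext x
    rw [exponentialPDF_eq]
    unfold expDens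
    congr 1
    split_ifs with hx
    · congr 1
      ring
    · rfl
  rw [h]
  exact isProbabilityMeasure_expMeasure (by positivity)

lemma integral_exp_neg_mul_Ioi {c : ℝ} (hc : 0 < c) :
    ∫ y in Set.Ioi (0:ℝ), Real.exp (-(c * y)) = 1 / c := by
  have := integral_comp_mul_left_Ioi (fun y => Real.exp (-y)) 0 hc
  simp only [mul_zero, integral_exp_neg_Ioi_zero, smul_eq_mul, mul_one] at this
  rw [this]
  rw [one_div]

/-- The substitution step: outer integral equals `a e^a E₁(a)`. -/
lemma outer_integral {s Ω₁ Ω₂ : ℝ} (hs : 0 < s) (hΩ₁ : 0 < Ω₁) (hΩ₂ : 0 < Ω₂) :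
    ∫ x in Set.Ioi (0:ℝ), 1 / Ω₁ * Real.exp (-x / Ω₁) * (1 / (s * Ω₂ * x + 1)) =
      1 / (s * Ω₁ * Ω₂) * Real.exp (1 / (s * Ω₁ * Ω₂)) * E1 (1 / (s * Ω₁ * Ω₂)) := by
  set a := 1 / (s * Ω₁ * Ω₂) with ha
  have ha0 : 0 < a := by positivity
  have himg : (fun x : ℝ => a + x / Ω₁) '' Set.Ioi 0 = Set.Ioi a := by
    ext t
    simp only [Set.mem_image, Set.mem_Ioi]
    constructor
    · rintro ⟨x, hx, rfl⟩
      have : 0 < x / Ω₁ := div_pos hx hΩ₁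
      linarith
    · intro ht
      refine ⟨(t - a) * Ω₁, by nlinarith, by field_simp; ring⟩
  have hderiv : ∀ x ∈ Set.Ioi (0:ℝ),
      HasDerivWithinAt (fun x : ℝ => a + x / Ω₁) (1 / Ω₁) (Set.Ioi 0) x := by
    intro x _
    have : HasDerivAt (fun x : ℝ => a + x / Ω₁) (1 / Ω₁) x := by
      simpa using ((hasDerivAt_id x).div_const Ω₁).const_add a
    exact this.hasDerivWithinAt
  have hinj : Set.InjOn (fun x : ℝ => a + x / Ω₁) (Set.Ioi 0) := by
    intro x _ y _ h
    simp only at h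
    have : x / Ω₁ = y / Ω₁ := by linarith
    field_simp at this
    exact this
  have hsub := integral_image_eq_integral_abs_deriv_smul measurableSet_Ioi hderiv hinj
    (fun t => Real.exp (-t) / t)
  rw [himg] at hsub
  have hE1 : E1 a = ∫ x in Set.Ioi (0:ℝ),
      |1 / Ω₁| • (Real.exp (-(a + x / Ω₁)) / (a + x / Ω₁)) := by
    rw [E1, hsub]
  rw [hE1, ← MeasureTheory.integral_const_mul]
  refine setIntegral_congr_fun measurableSet_Ioi (fun x hx => ?_)
  simp only [Set.mem_Ioi] at hx
  have habs : |1 / Ω₁| = 1 / Ω₁ := abs_of_pos (by positivity)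
  have hexp : Real.exp (-(a + x / Ω₁)) = Real.exp (-a) * Real.exp (-x / Ω₁) := by
    rw [← Real.exp_add]; ring_nf
  have hexp2 : Real.exp a * Real.exp (-a) = 1 := by
    rw [← Real.exp_add]; simp
  have hd : a * (s * Ω₂ * x + 1) = a + x / Ω₁ := by
    rw [ha]; field_simp; ring
  have hc0 : (0:ℝ) < s * Ω₂ * x + 1 := by positivity
  have hd0 : (0:ℝ) < a + x / Ω₁ := by positivity
  rw [smul_eq_mul, habs, hexp, ← hd]
  have ha' : a ≠ 0 := ne_of_gt ha0
  have hc' : s * Ω₂ * x + 1 ≠ 0 := ne_of_gt hc0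
  have h5 : a / (a * (s * Ω₂ * x + 1)) = 1 / (s * Ω₂ * x + 1) := by
    field_simp
  have h6 : a * Real.exp a *
      (1 / Ω₁ * (Real.exp (-a) * Real.exp (-x / Ω₁) / (a * (s * Ω₂ * x + 1)))) =
      Real.exp a * Real.exp (-a) * (a / (a * (s * Ω₂ * x + 1))) *
        (1 / Ω₁ * Real.exp (-x / Ω₁)) := by
    ring
  rw [h6, hexp2, h5, one_mul]
  ring

/-- Laplace transform of a product of two independent exponentials:
`E[exp(-s X Y)] = (1/(sΩ₁Ω₂)) exp(1/(sΩ₁Ω₂)) E₁(1/(sΩ₁Ω₂))` for `s > 0`. -/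
theorem laplace_product_exponential
    {Ω : Type*} [MeasureSpace Ω] [IsProbabilityMeasure (ℙ : Measure Ω)]
    (X Y : Ω → ℝ) (hX : Measurable X) (hY : Measurable Y)
    (Ω₁ Ω₂ : ℝ) (hΩ₁ : 0 < Ω₁) (hΩ₂ : 0 < Ω₂)
    (hindep : IndepFun X Y ℙ)
    (hXlaw : Measure.map X ℙ =
      MeasureTheory.volume.withDensity (fun x => ENNReal.ofReal (expDens Ω₁ x)))
    (hYlaw : Measure.map Y ℙ =
      MeasureTheory.volume.withDensity (fun y => ENNReal.ofReal (expDens Ω₂ y)))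
    (s : ℝ) (hs : 0 < s) :
    ∫ ω, Real.exp (-s * (X ω * Y ω)) ∂ℙ =
      1 / (s * Ω₁ * Ω₂) * Real.exp (1 / (s * Ω₁ * Ω₂)) * E1 (1 / (s * Ω₁ * Ω₂)) := by
  have hF : Continuous fun p : ℝ × ℝ => Real.exp (-s * (p.1 * p.2)) := by
    fun_prop
  have hmap : Measure.map (fun ω => (X ω, Y ω)) ℙ =
      (Measure.map X ℙ).prod (Measure.map Y ℙ) :=
    (indepFun_iff_map_prod_eq_prod_map_map hX.aemeasurable hY.aemeasurable).mp hindep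
  haveI hPX : IsProbabilityMeasure (Measure.map X ℙ) := hXlaw ▸ expDens_isProb hΩ₁
  haveI hPY : IsProbabilityMeasure (Measure.map Y ℙ) := hYlaw ▸ expDens_isProb hΩ₂
  have step1 : ∫ ω, Real.exp (-s * (X ω * Y ω)) ∂ℙ =
      ∫ p, Real.exp (-s * (p.1 * p.2)) ∂((Measure.map X ℙ).prod (Measure.map Y ℙ)) := by
    rw [← hmap, integral_map (hX.aemeasurable.prodMk hY.aemeasurable)
      hF.aestronglyMeasurable]
  have hXneg : (Measure.map X ℙ) (Set.Iio 0) = 0 := by rw [hXlaw]; exact expDens_measure_Iio Ω₁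
  have hYneg : (Measure.map Y ℙ) (Set.Iio 0) = 0 := by rw [hYlaw]; exact expDens_measure_Iio Ω₂
  have haeP : ∀ᵐ p ∂((Measure.map X ℙ).prod (Measure.map Y ℙ)),
      0 ≤ p.1 ∧ 0 ≤ p.2 := by
    rw [MeasureTheory.ae_iff]
    refine measure_mono_null
      (t := (Set.Iio 0 ×ˢ Set.univ) ∪ (Set.univ ×ˢ Set.Iio 0))
      (fun p hp => ?_) (measure_union_null ?_ ?_)
    · simp only [Set.mem_setOf_eq, not_and_or, not_le] at hp
      rcases hp with h | h
      · exact Or.inl ⟨h, Set.mem_univ _⟩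
      · exact Or.inr ⟨Set.mem_univ _, h⟩
    · rw [Measure.prod_prod, hXneg, zero_mul]
    · rw [Measure.prod_prod, hYneg, mul_zero]
  have hint : Integrable (fun p : ℝ × ℝ => Real.exp (-s * (p.1 * p.2)))
      ((Measure.map X ℙ).prod (Measure.map Y ℙ)) := by
    refine Integrable.mono' (integrable_const 1) hF.aestronglyMeasurable ?_
    filter_upwards [haeP] with p hp
    rw [Real.norm_eq_abs, abs_of_pos (Real.exp_pos _)]
    rw [Real.exp_le_one_iff]
    nlinarith [hp.1, hp.2, mul_nonneg hp.1 hp.2]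
  rw [step1, MeasureTheory.integral_prod _ hint, hXlaw, hYlaw,
    integral_expDens hΩ₁]
  have hinner : ∀ x ∈ Set.Ioi (0:ℝ),
      1 / Ω₁ * Real.exp (-x / Ω₁) *
        (∫ y, Real.exp (-s * (x * y))
          ∂(MeasureTheory.volume.withDensity (fun y => ENNReal.ofReal (expDens Ω₂ y)))) =
      1 / Ω₁ * Real.exp (-x / Ω₁) * (1 / (s * Ω₂ * x + 1)) := by
    intro x hx
    simp only [Set.mem_Ioi] at hx
    congr 1
    rw [integral_expDens hΩ₂]
    have hc : (0:ℝ) < s * x + 1 / Ω₂ := by positivity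
    have : ∀ y ∈ Set.Ioi (0:ℝ),
        1 / Ω₂ * Real.exp (-y / Ω₂) * Real.exp (-s * (x * y)) =
        1 / Ω₂ * Real.exp (-((s * x + 1 / Ω₂) * y)) := by
      intro y _
      rw [mul_assoc, ← Real.exp_add]
      congr 2
      field_simp
      ring
    rw [setIntegral_congr_fun measurableSet_Ioi this, MeasureTheory.integral_const_mul,
      integral_exp_neg_mul_Ioi hc]
    field_simp
  rw [setIntegral_congr_fun measurableSet_Ioi hinner]
  exact outer_integral hs hΩ₁ hΩ₂
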